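/- Let K be a field of characteristic 3. A polynomial g ∈ K[T] satisfies g(T+1) = g(T) if and only if g is a polynomial in T³ − T. -/

import Mathlib

open Polynomial

section Aux

variable (K : Type*) [Field K] [CharP K 3]

lemma keycomp : ((X : K[X]) ^ 3 - X).comp (X + 1) = X ^ 3 - X := by
  haveI : Fact (Nat.Prime 3) := ⟨by norm_num⟩
  have h3 : ((X : K[X]) + 1) ^ 3 = X ^ 3 + 1 := by
    rw [add_pow_char (p := 3), one_pow]
  simp only [sub_comp, pow_comp, X_comp]
  rw [h3]; ring

lemma monic_key : ((X : K[X]) ^ 3 - X).Monic :=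
  monic_X_pow_sub (by simpa using (by norm_num : (1 : WithBot ℕ) < 3))

lemma degree_key : ((X : K[X]) ^ 3 - X).degree = 3 := by
  rw [degree_sub_eq_left_of_degree_lt (by rw [degree_X, degree_X_pow]; norm_num),
    degree_X_pow]
  rfl

-- an invariant polynomial of degree < 3 is constant
lemma small_const (r : K[X]) (hr : r.degree < 3) (hinv : r.comp (X + 1) = r) :
    r = C (r.eval 0) := by
  classical
  have heval : ∀ x : K, r.eval (x + 1) = r.eval x := by
    intro x
    have := congrArg (eval x) hinv
    simpa [eval_comp] using this
  have h1 : r.eval 1 = r.eval 0 := by simpa using heval 0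
  have h2 : r.eval 2 = r.eval 0 := by
    have := heval 1; rw [h1] at this; rw [← this]; norm_num
  have hd : (r - C (r.eval 0)).natDegree < 3 := by
    have hle : (r - C (r.eval 0)).natDegree ≤ max r.natDegree (C (r.eval 0)).natDegree :=
      natDegree_sub_le _ _
    have hr' : r.natDegree < 3 := by
      by_cases h0 : r = 0
      · simp [h0]
      · exact_mod_cast (degree_eq_natDegree h0 ▸ hr)
    have : (C (r.eval 0) : K[X]).natDegree = 0 := natDegree_C _
    omega
  have hcard : ({0, 1, 2} : Finset K).card = 3 := by
    have h10 : (1 : K) ≠ 0 := one_ne_zero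
    have h20 : (2 : K) ≠ 0 := by
      intro h
      have h3 : (3 : K) = 0 := CharP.cast_eq_zero K 3
      have : (1 : K) = 0 := by
        have : (2 : K) + 1 = 3 := by norm_num
        rw [← this, h, zero_add] at h3; exact h3
      exact one_ne_zero this
    have h21 : (2 : K) ≠ 1 := by
      intro h
      have : (2 : K) - 1 = 0 := by rw [h]; ring
      norm_num at this
    rw [Finset.card_insert_of_notMem (by simp [h10.symm, h20.symm]),
      Finset.card_insert_of_notMem (by simp [h21.symm])]
    simp
  have hz : r - C (r.eval 0) = 0 := by
    apply eq_zero_of_natDegree_lt_card_of_eval_eq_zero' _ ({0, 1, 2} : Finset K)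
    · intro i hi
      simp only [Finset.mem_insert, Finset.mem_singleton] at hi
      rcases hi with rfl | rfl | rfl <;> simp [h1, h2]
    · rw [hcard]; exact hd
  exact eq_of_sub_eq_zero hz

lemma fwd : ∀ n (g : K[X]), g.natDegree ≤ n → g.comp (X + 1) = g →
    ∃ h : K[X], g = h.comp (X ^ 3 - X) := by
  intro n
  induction n using Nat.strong_induction_on with
  | _ n ih =>
    intro g hdeg hg
    by_cases hsmall : g.degree < 3
    · exact ⟨C (g.eval 0), by rw [C_comp, ← small_const K g hsmall hg]⟩
    push_neg at hsmall
    set q := g /ₘ (X ^ 3 - X) with hq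
    set r := g %ₘ (X ^ 3 - X) with hr
    have hm := monic_key K
    have hgdec : r + (X ^ 3 - X) * q = g := modByMonic_add_div g _
    have hrlt : r.degree < ((X : K[X]) ^ 3 - X).degree := degree_modByMonic_lt g hm
    have hrlt3 : r.degree < 3 := degree_key K ▸ hrlt
    -- degree of r.comp (X+1)
    have hrclt : (r.comp (X + 1)).degree < ((X : K[X]) ^ 3 - X).degree := by
      rw [degree_key]
      by_cases h0 : r = 0
      · rw [h0, zero_comp, degree_zero]
        exact_mod_cast WithBot.bot_lt_coe 3
      · have hc0 : r.comp (X + 1) ≠ 0 := fun h => by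
          have := congrArg (fun p => p.comp (X - 1)) h
          simp only [comp_assoc, add_comp, X_comp, one_comp, zero_comp] at this
          rw [show (X : K[X]) - 1 + 1 = X by ring, comp_X] at this
          exact h0 this
        rw [degree_eq_natDegree hc0, natDegree_comp]
        have : ((X : K[X]) + 1).natDegree = 1 := by
          compute_degree!
        rw [this, mul_one, ← degree_eq_natDegree h0]
        exact hrlt3
    have hdecomp : r.comp (X + 1) + (X ^ 3 - X) * q.comp (X + 1) = g := by
      conv_rhs => rw [← hg, ← hgdec]
      simp only [add_comp, mul_comp, keycomp]
    obtain ⟨hq', hr'⟩ := div_modByMonic_unique (q.comp (X + 1)) (r.comp (X + 1)) hm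
      ⟨hdecomp, hrclt⟩
    have hqinv : q.comp (X + 1) = q := hq'.symm
    have hrinv : r.comp (X + 1) = r := hr'.symm
    -- r is constant
    have hrC : r = C (r.eval 0) := small_const K r hrlt3 hrinv
    -- degree of q
    have hg3 : 3 ≤ g.natDegree := by
      by_cases h0 : g = 0
      · exfalso; rw [h0, degree_zero] at hsmall
        exact absurd hsmall (by simp)
      · have := degree_eq_natDegree h0 ▸ hsmall
        exact_mod_cast this
    have hn3 : ((X : K[X]) ^ 3 - X).natDegree = 3 :=
      natDegree_eq_of_degree_eq_some (degree_key K)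
    have hqdeg : q.natDegree = g.natDegree - 3 := by
      rw [hq, natDegree_divByMonic g hm, hn3]
    have hqlt : q.natDegree < n := by omega
    obtain ⟨h, hh⟩ := ih q.natDegree hqlt q le_rfl hqinv
    refine ⟨X * h + C (r.eval 0), ?_⟩
    rw [add_comp, mul_comp, X_comp, C_comp, ← hh, ← hrC, add_comm, hgdec]

end Aux

theorem stmt_10 (K : Type*) [Field K] [CharP K 3] (g : K[X]) :
    g.comp (X + 1) = g ↔ ∃ h : K[X], g = h.comp (X ^ 3 - X) := by
  constructor
  · intro hg
    exact fwd K g.natDegree g le_rfl hg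
  · rintro ⟨h, rfl⟩
    rw [comp_assoc, keycomp]
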